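/- Let μ be the real Gaussian probability measure with mean m > 0 and standard deviation s > 0, and set β = m/s. Then the probability of the event {x < 0} under μ equals Φ(−β), and the conditional expectation of −x given {x < 0}, namely (∫_{(−∞,0)} (−x) dμ(x)) / μ((−∞,0)), equals s·(φ(β)/Φ(−β) − β). In particular, the normalized expected failure deficit E_f* = E[−x | x < 0]/s of a Gaussian limit-state variable equals F(β) = φ(β)/Φ(−β) − β. -/

import Mathlib

open MeasureTheory Filter

/-- Standard normal density. -/
noncomputable def phi (x : ℝ) : ℝ := Real.exp (-x ^ 2 / 2) / Real.sqrt (2 * Real.pi)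

/-- Standard normal cumulative distribution function. -/
noncomputable def Phi (x : ℝ) : ℝ := ∫ t in Set.Iio x, phi t

/-- Mills-type ratio. -/
noncomputable def r (b : ℝ) : ℝ := phi b / Phi (-b)

/-- The deficit transformation `F`. -/
noncomputable def F (b : ℝ) : ℝ := phi b / Phi (-b) - b

open Real Set
open scoped ENNReal NNReal

lemma phi_pos (x : ℝ) : 0 < phi x :=
  div_pos (Real.exp_pos _) (Real.sqrt_pos.2 (by positivity))

lemma phi_even (x : ℝ) : phi (-x) = phi x := by simp [phi]

lemma phi_eq (x : ℝ) : phi x = (Real.sqrt (2 * Real.pi))⁻¹ * Real.exp (-(1/2) * x ^ 2) := by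
  rw [phi, show -(1/2) * x ^ 2 = -x ^ 2 / 2 by ring, div_eq_inv_mul]

lemma gaussianPDFReal_zero_one (x : ℝ) : ProbabilityTheory.gaussianPDFReal 0 1 x = phi x := by
  simp only [ProbabilityTheory.gaussianPDFReal, NNReal.coe_one, mul_one, sub_zero, phi]
  ring

lemma integrable_phi : Integrable phi := by
  have h : Integrable (fun x : ℝ => (Real.sqrt (2*Real.pi))⁻¹ * Real.exp (-(1/2) * x ^ 2)) :=
    (integrable_exp_neg_mul_sq (by norm_num)).const_mul _
  refine h.congr (Filter.Eventually.of_forall fun x => (phi_eq x).symm)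

lemma integrable_xphi : Integrable (fun x : ℝ => x * phi x) := by
  have h : Integrable (fun x : ℝ => (Real.sqrt (2*Real.pi))⁻¹ * (x * Real.exp (-(1/2) * x ^ 2))) :=
    (integrable_mul_exp_neg_mul_sq (by norm_num)).const_mul _
  refine h.congr (Filter.Eventually.of_forall fun x => ?_)
  simp only [phi_eq]; ring

lemma hasDerivAt_negPhi (x : ℝ) : HasDerivAt (fun y => -phi y) (x * phi x) x := by
  have h1 : HasDerivAt (fun y : ℝ => -y ^ 2 / 2) (-x) x := by
    have := ((hasDerivAt_pow 2 x).neg.div_const 2)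
    refine this.congr_deriv ?_
    simp; ring
  have h2 := (h1.exp.div_const (Real.sqrt (2 * Real.pi))).neg
  refine h2.congr_deriv ?_
  rw [phi]; ring

lemma tendsto_phi_atBot : Tendsto (fun x : ℝ => -phi x) atBot (nhds 0) := by
  have h1 : Tendsto (fun x : ℝ => x ^ 2) atBot atTop := by
    have h := Filter.tendsto_id.atBot_mul_atBot₀ (tendsto_id (α := ℝ))
    refine h.congr fun x => ?_
    simp only [id]; ring
  have h2 : Tendsto (fun x : ℝ => -x ^ 2 / 2) atBot atBot :=
    (tendsto_neg_atTop_atBot.comp h1).atBot_div_const two_pos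
  have h4 := ((Real.tendsto_exp_atBot.comp h2).div_const (Real.sqrt (2 * Real.pi))).neg
  simpa [phi, Function.comp] using h4

lemma integral_xphi_Iio (c : ℝ) : ∫ x in Iio c, x * phi x = -phi c := by
  rw [← integral_Iic_eq_integral_Iio]
  rw [integral_Iic_of_hasDerivAt_of_tendsto' (fun x _ => hasDerivAt_negPhi x)
    integrable_xphi.integrableOn tendsto_phi_atBot, sub_zero]

lemma Phi_pos (c : ℝ) : 0 < Phi c := by
  rw [Phi, setIntegral_pos_iff_support_of_nonneg_ae
    (Filter.Eventually.of_forall fun x => (phi_pos x).le) integrable_phi.integrableOn]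
  have : Function.support phi = Set.univ := by
    ext x; simp [Function.mem_support, (phi_pos x).ne']
  simp [this, Real.volume_Iio]

open ProbabilityTheory

lemma g01_apply_Iio (c : ℝ) : gaussianReal 0 1 (Iio c) = ENNReal.ofReal (Phi c) := by
  rw [gaussianReal_apply_eq_integral 0 one_ne_zero]
  congr 1
  simp only [gaussianPDFReal_zero_one]
  rfl

lemma g01_setIntegral (c : ℝ) (f : ℝ → ℝ) :
    ∫ x in Iio c, f x ∂(gaussianReal 0 1) = ∫ x in Iio c, phi x * f x := by
  rw [gaussianReal_of_var_ne_zero 0 one_ne_zero]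
  have h : gaussianPDF 0 1 = fun x => ((gaussianPDFReal 0 1 x).toNNReal : ℝ≥0∞) := rfl
  rw [h, setIntegral_withDensity_eq_setIntegral_smul
    ((measurable_gaussianPDFReal 0 1).real_toNNReal) f measurableSet_Iio]
  refine integral_congr_ae (Filter.Eventually.of_forall fun x => ?_)
  show (gaussianPDFReal 0 1 x).toNNReal • f x = phi x * f x
  rw [NNReal.smul_def, Real.coe_toNNReal _ (gaussianPDFReal_nonneg 0 1 x),
    gaussianPDFReal_zero_one, smul_eq_mul]

lemma gauss_map (m s : ℝ) (hs : 0 < s) :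
    gaussianReal m ⟨s ^ 2, sq_nonneg s⟩ = Measure.map (fun x => s * x + m) (gaussianReal 0 1) := by
  have h1 : Measure.map (s * ·) (gaussianReal 0 1) = gaussianReal 0 ⟨s ^ 2, sq_nonneg s⟩ := by
    rw [gaussianReal_map_const_mul s, mul_zero, mul_one]
    rfl
  have h2 : Measure.map (· + m) (gaussianReal 0 ⟨s ^ 2, sq_nonneg s⟩)
      = gaussianReal m ⟨s ^ 2, sq_nonneg s⟩ := by
    have := gaussianReal_map_add_const (μ := 0) (v := ⟨s ^ 2, sq_nonneg s⟩) m
    rwa [zero_add] at this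
  rw [← h2, ← h1, Measure.map_map (measurable_add_const m) (measurable_const_mul s)]
  rfl


/-- For a Gaussian measure with mean `m > 0` and standard deviation `s > 0`, setting
`β = m/s`: the failure probability is `Φ(−β)`, the expected failure deficit
`E[−x ∣ x < 0]` equals `s·(φ(β)/Φ(−β) − β)`, and the normalized deficit equals `F(β)`. -/
theorem gaussian_expected_failure_deficit (m s : ℝ) (hm : 0 < m) (hs : 0 < s) :
    (ProbabilityTheory.gaussianReal m ⟨s ^ 2, sq_nonneg s⟩) (Set.Iio 0)
        = ENNReal.ofReal (Phi (-(m / s))) ∧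
      (∫ x in Set.Iio (0 : ℝ), -x ∂(ProbabilityTheory.gaussianReal m ⟨s ^ 2, sq_nonneg s⟩)) /
          ((ProbabilityTheory.gaussianReal m ⟨s ^ 2, sq_nonneg s⟩) (Set.Iio 0)).toReal
        = s * (phi (m / s) / Phi (-(m / s)) - m / s) ∧
      (∫ x in Set.Iio (0 : ℝ), -x ∂(ProbabilityTheory.gaussianReal m ⟨s ^ 2, sq_nonneg s⟩)) /
          (s * ((ProbabilityTheory.gaussianReal m ⟨s ^ 2, sq_nonneg s⟩) (Set.Iio 0)).toReal)
        = F (m / s) := by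
  have hs' : s ≠ 0 := ne_of_gt hs
  have hpre : (fun x : ℝ => s * x + m) ⁻¹' (Set.Iio 0) = Set.Iio (-(m / s)) := by
    ext x
    simp only [Set.mem_preimage, Set.mem_Iio]
    rw [show -(m / s) = -m / s by ring, lt_div_iff₀ hs]
    constructor <;> intro h <;> nlinarith
  have hmap := gauss_map m s hs
  have hmeas : Measurable fun x : ℝ => s * x + m := (measurable_const_mul s).add_const m
  have hP : (gaussianReal m ⟨s ^ 2, sq_nonneg s⟩) (Set.Iio 0)
      = ENNReal.ofReal (Phi (-(m / s))) := by
    rw [hmap, Measure.map_apply hmeas measurableSet_Iio, hpre, g01_apply_Iio]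
  have hI : (∫ x in Set.Iio (0 : ℝ), -x ∂(gaussianReal m ⟨s ^ 2, sq_nonneg s⟩))
      = s * phi (m / s) - m * Phi (-(m / s)) := by
    rw [hmap, setIntegral_map measurableSet_Iio
      ((measurable_neg : Measurable fun y : ℝ => -y).aestronglyMeasurable) hmeas.aemeasurable, hpre,
      g01_setIntegral]
    have hsplit : (∫ x in Iio (-(m / s)), phi x * -(s * x + m))
        = ∫ x in Iio (-(m / s)), ((-s) * (x * phi x) + (-m) * phi x) :=
      integral_congr_ae (Filter.Eventually.of_forall fun x => by ring)
    rw [hsplit, integral_add ((integrable_xphi.integrableOn).const_mul _)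
      ((integrable_phi.integrableOn).const_mul _), integral_const_mul, integral_const_mul,
      integral_xphi_Iio, show (∫ x in Iio (-(m / s)), phi x) = Phi (-(m / s)) from rfl,
      phi_even (m / s)]
    ring
  have hPhi := Phi_pos (-(m / s))
  have hPt : ((gaussianReal m ⟨s ^ 2, sq_nonneg s⟩) (Set.Iio 0)).toReal = Phi (-(m / s)) := by
    rw [hP, ENNReal.toReal_ofReal hPhi.le]
  set P := Phi (-(m / s)) with hPdef
  set q := phi (m / s) with hqdef
  have hPne : P ≠ 0 := ne_of_gt hPhi
  refine ⟨hP, ?_, ?_⟩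
  · rw [hI, hPt]; field_simp
  · rw [hI, hPt, F, ← hPdef, ← hqdef]; field_simp
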